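/- Let k01, k10 : ℝ → ℝ be nonnegative continuously differentiable functions, A = −(k01 + k10), let 𝒟 = [a,b] be compact with A(v) ≤ −ν < 0 on 𝒟, and set g₁ = max_{v ∈ 𝒟} |k01'(v)|. Let w : (−∞,0] → (0,1] be measurable with ∫_{−∞}^0 e^{ν τ}/w_τ dτ < ∞. Then for any measurable V, V' : (−∞,0] → 𝒟, the quantity H₂(V,V') = ∫_{−∞}^0 exp(∫_τ^0 A(V'_s) ds) · |k01(V_τ) − k01(V'_τ)| dτ satisfies H₂(V,V') ≤ g₁ · ( ∫_{−∞}^0 e^{ν τ}/w_τ dτ ) · ‖V − V'‖_w. -/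

import Mathlib

open MeasureTheory

/-- bound on the term `H₂` in the proof of Theorem 1: with
`A = −(k01 + k10)`, inputs valued in `𝒟 = [a,b]` where `A ≤ −ν < 0`,
`g₁ = max_𝒟 |k01'|`, and a weighting function `w : (−∞,0] → (0,1]` with
`∫_{−∞}^0 e^{ντ}/w_τ dτ < ∞`, one has
`H₂(V,V') ≤ g₁·(∫_{−∞}^0 e^{ντ}/w_τ dτ)·‖V − V'‖_w`. -/
theorem dms_H2_bound
    (k01 k10 A : ℝ → ℝ)
    (hk01 : ContDiff ℝ 1 k01) (hk10 : ContDiff ℝ 1 k10)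
    (hk01n : ∀ v, 0 ≤ k01 v) (hk10n : ∀ v, 0 ≤ k10 v)
    (hA : ∀ v, A v = -(k01 v + k10 v))
    (a b ν : ℝ) (hab : a ≤ b) (hν : 0 < ν)
    (hAν : ∀ v ∈ Set.Icc a b, A v ≤ -ν)
    (g₁ : ℝ)
    (hg₁ : IsGreatest ((fun v => |deriv k01 v|) '' Set.Icc a b) g₁)
    (w : ℝ → ℝ) (hwm : Measurable w)
    (hw : ∀ t ≤ (0 : ℝ), 0 < w t ∧ w t ≤ 1)
    (hwint : IntegrableOn (fun τ => Real.exp (ν * τ) / w τ) (Set.Iic 0))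
    (V V' : ℝ → ℝ) (hVm : Measurable V) (hV'm : Measurable V')
    (hV : ∀ t ≤ (0 : ℝ), V t ∈ Set.Icc a b)
    (hV' : ∀ t ≤ (0 : ℝ), V' t ∈ Set.Icc a b) :
    (∫ τ in Set.Iic (0 : ℝ),
        Real.exp (∫ s in τ..0, A (V' s)) * |k01 (V τ) - k01 (V' τ)|) ≤
      g₁ * (∫ τ in Set.Iic (0 : ℝ), Real.exp (ν * τ) / w τ) *
        essSup (fun t => w t * |V t - V' t|) (volume.restrict (Set.Iic (0 : ℝ))) := by
  set μ := volume.restrict (Set.Iic (0 : ℝ)) with hμ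
  set M := essSup (fun t => w t * |V t - V' t|) μ with hM
  -- g₁ ≥ 0
  obtain ⟨v₀, hv₀, hv₀eq⟩ := hg₁.1
  have hg10 : 0 ≤ g₁ := hv₀eq ▸ abs_nonneg _
  -- boundedness under ae, for ae_le_essSup
  have haemem : ∀ᵐ t ∂μ, t ∈ Set.Iic (0 : ℝ) :=
    ae_restrict_mem measurableSet_Iic
  have hbdd : Filter.IsBoundedUnder (· ≤ ·) (ae μ) (fun t => w t * |V t - V' t|) := by
    refine ⟨b - a, haemem.mono fun t ht => ?_⟩
    have h1 := hw t ht
    have h2 := hV t ht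
    have h3 := hV' t ht
    have habs : |V t - V' t| ≤ b - a := by
      rw [abs_sub_le_iff]
      constructor <;> [linarith [h2.2, h3.1]; linarith [h3.2, h2.1]]
    calc w t * |V t - V' t| ≤ 1 * (b - a) :=
          mul_le_mul h1.2 habs (abs_nonneg _) zero_le_one
      _ = b - a := one_mul _
  have hae : ∀ᵐ t ∂μ, w t * |V t - V' t| ≤ M := ae_le_essSup hbdd
  have hμne : μ ≠ 0 := by
    intro h
    have h1 : μ (Set.Iic 0) = volume (Set.Iic (0:ℝ)) := by
      rw [hμ, Measure.restrict_apply_self]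
    rw [h] at h1
    simp [Real.volume_Iic] at h1
  haveI : (ae μ).NeBot := ae_neBot.mpr hμne
  have hM0 : 0 ≤ M := by
    refine Filter.le_limsup_of_frequently_le ?_ hbdd
    exact (haemem.mono fun t ht => mul_nonneg (hw t ht).1.le (abs_nonneg _)).frequently
  -- Lipschitz bound for k01 on [a,b]
  have hk01d : Differentiable ℝ k01 := hk01.differentiable one_ne_zero
  have hlip : ∀ x ∈ Set.Icc a b, ∀ y ∈ Set.Icc a b,
      |k01 x - k01 y| ≤ g₁ * |x - y| := by
    intro x hx y hy
    have := (convex_Icc a b).norm_image_sub_le_of_norm_deriv_le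
      (f := k01) (fun z _ => hk01d z)
      (fun z hz => by
        simpa [Real.norm_eq_abs] using hg₁.2 ⟨z, hz, rfl⟩) hy hx
    simpa [Real.norm_eq_abs] using this
  -- bound on A ∘ V'
  have hAc : Continuous A := by
    have : Continuous fun v => -(k01 v + k10 v) :=
      ((hk01.continuous).add (hk10.continuous)).neg
    exact this.congr fun v => (hA v).symm
  obtain ⟨C, hC⟩ := (isCompact_Icc (a := a) (b := b)).exists_bound_of_continuousOn
    hAc.continuousOn
  -- the dominating function
  have hgint : IntegrableOn
      (fun τ => g₁ * M * (Real.exp (ν * τ) / w τ)) (Set.Iic (0 : ℝ)) :=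
    hwint.const_mul _
  have key : (∫ τ in Set.Iic (0 : ℝ),
        Real.exp (∫ s in τ..0, A (V' s)) * |k01 (V τ) - k01 (V' τ)|) ≤
      ∫ τ in Set.Iic (0 : ℝ), g₁ * M * (Real.exp (ν * τ) / w τ) := by
    refine integral_mono_of_nonneg ?_ hgint ?_
    · exact Filter.Eventually.of_forall fun τ => by positivity
    · refine (haemem.and hae).mono fun τ ⟨hτ, hτM⟩ => ?_
      have hwτ := (hw τ hτ).1
      -- exp bound
      have hAint : IntervalIntegrable (fun s => A (V' s)) volume τ 0 := by
        rw [intervalIntegrable_iff_integrableOn_Ioc_of_le hτ]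
        refine Measure.integrableOn_of_bounded (M := C) measure_Ioc_lt_top.ne ?_ ?_
        · exact (hAc.measurable.comp hV'm).aestronglyMeasurable
        · refine (ae_restrict_mem measurableSet_Ioc).mono fun s hs => ?_
          exact hC _ (hV' s hs.2)
      have hiA : (∫ s in τ..0, A (V' s)) ≤ ν * τ := by
        have := intervalIntegral.integral_mono_on hτ hAint
          intervalIntegrable_const
          (fun s hs => hAν (V' s) (hV' s hs.2))
        rw [intervalIntegral.integral_const] at this
        have : (∫ s in τ..0, A (V' s)) ≤ (0 - τ) * (-ν) := by simpa using this
        linarith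
      have hexp : Real.exp (∫ s in τ..0, A (V' s)) ≤ Real.exp (ν * τ) :=
        Real.exp_le_exp.mpr hiA
      have hV1 := hV τ hτ
      have hV2 := hV' τ hτ
      have hΔ : |V τ - V' τ| ≤ M / w τ := by
        rw [le_div_iff₀ hwτ]
        linarith [hτM, mul_comm (w τ) (|V τ - V' τ|)]
      calc Real.exp (∫ s in τ..0, A (V' s)) * |k01 (V τ) - k01 (V' τ)|
          ≤ Real.exp (ν * τ) * (g₁ * |V τ - V' τ|) := by
            exact mul_le_mul hexp (hlip _ hV1 _ hV2) (abs_nonneg _)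
              (Real.exp_pos _).le
        _ ≤ Real.exp (ν * τ) * (g₁ * (M / w τ)) := by
            have := mul_le_mul_of_nonneg_left hΔ hg10
            exact mul_le_mul_of_nonneg_left this (Real.exp_pos _).le
        _ = g₁ * M * (Real.exp (ν * τ) / w τ) := by ring
  calc (∫ τ in Set.Iic (0 : ℝ),
        Real.exp (∫ s in τ..0, A (V' s)) * |k01 (V τ) - k01 (V' τ)|)
      ≤ ∫ τ in Set.Iic (0 : ℝ), g₁ * M * (Real.exp (ν * τ) / w τ) := key
    _ = g₁ * (∫ τ in Set.Iic (0 : ℝ), Real.exp (ν * τ) / w τ) * M := by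
        rw [integral_const_mul]; ring
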